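/- The average response time is an unbounded quantity: for every bound B there exists an infinite word over {r, g, i} whose average response time exceeds B. Consequently, no function on infinite words that is uniformly bounded (e.g., bounded by the maximum weight of a limit-average weighted automaton) can equal the average response time on all words. -/

import Mathlib

open Filter Finset

/-- The alphabet `{r, g, i}` of requests, grants and idle events. -/
inductive Letter : Type
  | r | g | i
deriving DecidableEq

/-- Response time at position `j`: the least `d > 0` with a grant at `j + d`. -/
noncomputable def respTime (w : ℕ → Letter) (j : ℕ) : ℕ :=
  sInf {d : ℕ | 0 < d ∧ w (j + d) = Letter.g}

/-- The position of the `k`-th request in `w`. -/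
noncomputable def reqPos (w : ℕ → Letter) (k : ℕ) : ℕ :=
  Nat.nth (fun j => w j = Letter.r) k

/-- Average response time: limsup of the averages of the response times of
the first `k` requests. -/
noncomputable def avgRespTime (w : ℕ → Letter) : ℝ :=
  Filter.limsup
    (fun k => (∑ i ∈ Finset.range k, (respTime w (reqPos w i) : ℝ)) / (k : ℝ)) atTop

/-- Every request is eventually granted. -/
def hasGrants (w : ℕ → Letter) : Prop :=
  ∀ j, w j = Letter.r → ∃ d, 0 < d ∧ w (j + d) = Letter.g

/-- A periodic word: request at multiples of `N+1`, grant `N` later. -/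
noncomputable def perWord (N : ℕ) : ℕ → Letter := fun j =>
  if j % (N + 1) = 0 then Letter.r else if j % (N + 1) = N then Letter.g else Letter.i

lemma perWord_eq_g_iff {N : ℕ} (hN : 0 < N) (x : ℕ) :
    perWord N x = Letter.g ↔ x % (N + 1) = N := by
  unfold perWord
  split_ifs with h1 h2 <;> simp_all <;> omega

lemma perWord_eq_r_iff {N : ℕ} (hN : 0 < N) (x : ℕ) :
    perWord N x = Letter.r ↔ x % (N + 1) = 0 := by
  unfold perWord
  split_ifs with h1 h2 <;> simp_all

lemma mod_helper {N j : ℕ} (hN : 0 < N) (hj : j % (N + 1) = 0) :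
    (j + N) % (N + 1) = N := by
  obtain ⟨q, rfl⟩ := Nat.dvd_of_mod_eq_zero hj
  rw [Nat.mul_add_mod]
  exact Nat.mod_eq_of_lt (by omega)

lemma respTime_perWord {N : ℕ} (hN : 0 < N) {j : ℕ} (hj : j % (N + 1) = 0) :
    respTime (perWord N) j = N := by
  have hmem : N ∈ {d : ℕ | 0 < d ∧ perWord N (j + d) = Letter.g} :=
    ⟨hN, (perWord_eq_g_iff hN _).2 (mod_helper hN hj)⟩
  have hne : {d : ℕ | 0 < d ∧ perWord N (j + d) = Letter.g}.Nonempty := ⟨N, hmem⟩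
  obtain ⟨hpos, hg⟩ := Nat.sInf_mem hne
  rw [perWord_eq_g_iff hN] at hg
  obtain ⟨q, rfl⟩ := Nat.dvd_of_mod_eq_zero hj
  rw [Nat.mul_add_mod] at hg
  have hge : N ≤ respTime (perWord N) ((N + 1) * q) := by
    have := Nat.mod_le (sInf {d : ℕ | 0 < d ∧ perWord N ((N + 1) * q + d) = Letter.g}) (N + 1)
    unfold respTime
    omega
  exact le_antisymm (Nat.sInf_le hmem) hge

lemma reqSet_infinite {N : ℕ} (hN : 0 < N) :
    {j | perWord N j = Letter.r}.Infinite := by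
  apply Set.infinite_of_injective_forall_mem (f := fun k : ℕ => k * (N + 1))
  · intro a b h
    simpa using Nat.eq_of_mul_eq_mul_right (by omega) h
  · intro k
    simp only [Set.mem_setOf_eq, perWord_eq_r_iff hN]
    simp [Nat.mul_mod_left]

lemma avgRespTime_perWord {N : ℕ} (hN : 0 < N) :
    avgRespTime (perWord N) = N := by
  unfold avgRespTime
  have hinf := reqSet_infinite hN
  have hresp : ∀ k : ℕ, respTime (perWord N) (reqPos (perWord N) k) = N := by
    intro k
    apply respTime_perWord hN
    have := Nat.nth_mem_of_infinite (p := fun j => perWord N j = Letter.r) hinf k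
    exact (perWord_eq_r_iff hN _).1 this
  have heq : (fun k => (∑ i ∈ Finset.range k,
      (respTime (perWord N) (reqPos (perWord N) i) : ℝ)) / (k : ℝ)) =ᶠ[atTop]
      fun _ => (N : ℝ) := by
    filter_upwards [eventually_ge_atTop 1] with k hk
    simp only [hresp]
    rw [Finset.sum_const, Finset.card_range, nsmul_eq_mul]
    field_simp
  rw [limsup_congr heq, limsup_const]

/-- The average response time is unbounded: it exceeds every bound `B` on some
word, hence no uniformly bounded function on infinite words can equal the
average response time on all words. -/
theorem avgRespTime_unbounded :
    (∀ B : ℝ, ∃ w : ℕ → Letter, hasGrants w ∧ B < avgRespTime w)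
    ∧ ∀ F : (ℕ → Letter) → ℝ, (∃ M : ℝ, ∀ w, |F w| ≤ M) →
        ¬ (∀ w : ℕ → Letter, hasGrants w → F w = avgRespTime w) := by
  have main : ∀ B : ℝ, ∃ w : ℕ → Letter, hasGrants w ∧ B < avgRespTime w := by
    intro B
    set N := ⌈B⌉₊ + 1 with hNdef
    have hN : 0 < N := by omega
    refine ⟨perWord N, ?_, ?_⟩
    · intro j hj
      rw [perWord_eq_r_iff hN] at hj
      exact ⟨N, hN, (perWord_eq_g_iff hN _).2 (mod_helper hN hj)⟩
    · rw [avgRespTime_perWord hN]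
      calc B ≤ (⌈B⌉₊ : ℝ) := Nat.le_ceil B
        _ < (N : ℝ) := by exact_mod_cast Nat.lt_succ_self _
  refine ⟨main, ?_⟩
  rintro F ⟨M, hM⟩ hF
  obtain ⟨w, hw, hB⟩ := main M
  have := hF w hw
  have := hM w
  have := le_abs_self (F w)
  linarith
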